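/- For every strictly ordered bid profile 0 < b_1 < b_2 < ⋯ < b_N, the function a ↦ W(a;b) is differentiable on (0,∞) and its derivative is continuous on (0,∞); in particular the left and right derivatives of W(·;b) agree at each of the points b_1,…,b_N. -/

import Mathlib

/-- Class expected waiting times `W_i` in the accumulating-priority M/G/1 queue
with class loads `ρ`, strictly ordered bid profile `b` and mean residual
service time `W0`, defined by Kleinrock's recursion
`W_i = (W₀/(1−ρ) − Σ_{k<i} ρ_k(1 − b_k/b_i)W_k) / (1 − Σ_{k≥i} ρ_k(1 − b_i/b_k))`. -/
noncomputable def classW {N : ℕ} (ρ b : Fin N → ℝ) (W0 : ℝ) : Fin N → ℝ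
  | i =>
    (W0 / (1 - ∑ k, ρ k)
      - ∑ k : Fin N, if h : k < i then ρ k * (1 - b k / b i) * classW ρ b W0 k else 0)
    / (1 - ∑ k : Fin N, if i ≤ k then ρ k * (1 - b i / b k) else 0)
  termination_by i => i.val
  decreasing_by exact h

/-- Expected waiting time of a tagged customer bidding `a > 0` against the
strictly ordered bid profile `b`:
`W(a;b) = (W₀/(1−ρ) − Σ_{k: b_k<a} ρ_k(1 − b_k/a)W_k) / (1 − Σ_{k: b_k≥a} ρ_k(1 − a/b_k))`. -/
noncomputable def taggedW {N : ℕ} (ρ b : Fin N → ℝ) (W0 : ℝ) (a : ℝ) : ℝ :=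
  (W0 / (1 - ∑ k, ρ k)
    - ∑ k : Fin N, if b k < a then ρ k * (1 - b k / a) * classW ρ b W0 k else 0)
  / (1 - ∑ k : Fin N, if a ≤ b k then ρ k * (1 - a / b k) else 0)

open Set Filter

namespace APQaux

variable {N : ℕ} (ρ b : Fin N → ℝ) (W0 : ℝ)

/-- Numerator of the local (threshold-`t`) formula. -/
noncomputable def gP (t a : ℝ) : ℝ :=
  W0 / (1 - ∑ k, ρ k)
    - ∑ k : Fin N, if b k < t then ρ k * (1 - b k / a) * classW ρ b W0 k else 0

/-- Denominator of the local formula. -/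
noncomputable def gQ (t a : ℝ) : ℝ :=
  1 - ∑ k : Fin N, if t ≤ b k then ρ k * (1 - a / b k) else 0

/-- Local smooth formula for the tagged waiting time. -/
noncomputable def g (t a : ℝ) : ℝ := gP ρ b W0 t a / gQ ρ b t a

noncomputable def gP' (t a : ℝ) : ℝ :=
  -∑ k : Fin N, if b k < t then ρ k * (b k / a ^ 2) * classW ρ b W0 k else 0

noncomputable def gQ' (t : ℝ) : ℝ :=
  ∑ k : Fin N, if t ≤ b k then ρ k / b k else 0

noncomputable def Dg (t a : ℝ) : ℝ :=
  (gP' ρ b W0 t a * gQ ρ b t a - gP ρ b W0 t a * gQ' ρ b t) / (gQ ρ b t a) ^ 2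

lemma taggedW_eq (a : ℝ) : taggedW ρ b W0 a = g ρ b W0 a a := rfl

lemma taggedW_congr (t x : ℝ) (h1 : ∀ k, b k < x ↔ b k < t)
    (h2 : ∀ k, x ≤ b k ↔ t ≤ b k) : taggedW ρ b W0 x = g ρ b W0 t x := by
  rw [taggedW_eq]
  unfold g gP gQ
  congr 1
  · congr 1
    exact Finset.sum_congr rfl fun k _ => if_congr (h1 k) rfl rfl
  · congr 1
    exact Finset.sum_congr rfl fun k _ => if_congr (h2 k) rfl rfl

variable (hN : 1 ≤ N) (hρ : ∀ k, 0 < ρ k) (hρsum : ∑ k, ρ k < 1) (hbpos : ∀ k, 0 < b k)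

section

include hN hρ hρsum hbpos

lemma gQ_pos (t : ℝ) {a : ℝ} (ha : 0 < a) : 0 < gQ ρ b t a := by
  have hne : (Finset.univ : Finset (Fin N)).Nonempty := ⟨⟨0, hN⟩, Finset.mem_univ _⟩
  have hlt : ∑ k : Fin N, (if t ≤ b k then ρ k * (1 - a / b k) else 0) < ∑ k, ρ k := by
    apply Finset.sum_lt_sum_of_nonempty hne
    intro k _
    split
    · have hb := hbpos k
      have h2 : 0 < a / b k := div_pos ha hb
      nlinarith [hρ k]
    · exact hρ k
  unfold gQ
  linarith

end

lemma hasDerivAt_gP (t : ℝ) {a : ℝ} (ha : a ≠ 0) :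
    HasDerivAt (gP ρ b W0 t) (gP' ρ b W0 t a) a := by
  have h1 : ∀ k : Fin N, HasDerivAt
      (fun x : ℝ => if b k < t then ρ k * (1 - b k / x) * classW ρ b W0 k else 0)
      (if b k < t then ρ k * (b k / a ^ 2) * classW ρ b W0 k else 0) a := by
    intro k
    split
    · have h : HasDerivAt (fun x : ℝ => ρ k * (1 - b k * x⁻¹) * classW ρ b W0 k)
          (ρ k * (-(b k * -(a ^ 2)⁻¹)) * classW ρ b W0 k) a :=
        ((((hasDerivAt_inv ha).const_mul (b k)).const_sub 1).const_mul (ρ k)).mul_const _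
      have heq : (fun x : ℝ => ρ k * (1 - b k * x⁻¹) * classW ρ b W0 k)
          = fun x : ℝ => ρ k * (1 - b k / x) * classW ρ b W0 k := by
        funext x; rw [div_eq_mul_inv]
      rw [heq] at h
      convert h using 1
      field_simp
    · exact hasDerivAt_const a 0
  have hs : HasDerivAt (fun x : ℝ => ∑ k : Fin N,
      if b k < t then ρ k * (1 - b k / x) * classW ρ b W0 k else 0)
      (∑ k : Fin N, if b k < t then ρ k * (b k / a ^ 2) * classW ρ b W0 k else 0) a :=
    HasDerivAt.fun_sum (fun k _ => h1 k)
  have h2 := hs.const_sub (W0 / (1 - ∑ k, ρ k))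
  exact h2

lemma hasDerivAt_gQ (t a : ℝ) : HasDerivAt (gQ ρ b t) (gQ' ρ b t) a := by
  have h1 : ∀ k : Fin N, HasDerivAt
      (fun x : ℝ => if t ≤ b k then ρ k * (1 - x / b k) else 0)
      (if t ≤ b k then ρ k * -(1 / b k) else 0) a := by
    intro k
    split
    · exact (((hasDerivAt_id a).div_const (b k)).const_sub 1).const_mul (ρ k)
    · exact hasDerivAt_const a 0
  have hs : HasDerivAt (fun x : ℝ => ∑ k : Fin N,
      if t ≤ b k then ρ k * (1 - x / b k) else 0)
      (∑ k : Fin N, if t ≤ b k then ρ k * -(1 / b k) else 0) a :=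
    HasDerivAt.fun_sum (fun k _ => h1 k)
  have h2 := hs.const_sub (1 : ℝ)
  convert h2 using 1
  any_goals rfl
  unfold gQ'
  rw [← Finset.sum_neg_distrib]
  exact Finset.sum_congr rfl fun k _ => by split <;> ring

include hN hρ hρsum hbpos in
lemma hasDerivAt_g (t : ℝ) {a : ℝ} (ha : 0 < a) :
    HasDerivAt (g ρ b W0 t) (Dg ρ b W0 t a) a :=
  (hasDerivAt_gP ρ b W0 t ha.ne').div (hasDerivAt_gQ ρ b t a)
    (gQ_pos ρ b hN hρ hρsum hbpos t ha).ne'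

lemma continuous_gQ (t : ℝ) : Continuous (gQ ρ b t) := by
  unfold gQ
  apply continuous_const.sub
  apply continuous_finset_sum
  intro k _
  split
  · exact continuous_const.mul (continuous_const.sub (continuous_id.div_const _))
  · exact continuous_const

lemma continuousOn_gP (t : ℝ) : ContinuousOn (gP ρ b W0 t) (Ioi 0) := by
  unfold gP
  apply continuousOn_const.sub
  apply continuousOn_finset_sum
  intro k _
  split
  · exact (continuousOn_const.mul (continuousOn_const.sub
      (continuousOn_const.div continuousOn_id fun x hx => ne_of_gt hx))).mul continuousOn_const
  · exact continuousOn_const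

lemma continuousOn_gP' (t : ℝ) : ContinuousOn (gP' ρ b W0 t) (Ioi 0) := by
  unfold gP'
  apply ContinuousOn.neg
  apply continuousOn_finset_sum
  intro k _
  split
  · exact (continuousOn_const.mul (continuousOn_const.div (continuousOn_pow 2)
      fun x hx => pow_ne_zero 2 (ne_of_gt hx))).mul continuousOn_const
  · exact continuousOn_const

include hN hρ hρsum hbpos in
lemma continuousOn_Dg (t : ℝ) : ContinuousOn (Dg ρ b W0 t) (Ioi 0) := by
  unfold Dg
  apply ContinuousOn.div
  · exact ((continuousOn_gP' ρ b W0 t).mul (continuous_gQ ρ b t).continuousOn).sub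
      ((continuousOn_gP ρ b W0 t).mul continuousOn_const)
  · exact ((continuous_gQ ρ b t).continuousOn).pow 2
  · exact fun x hx => pow_ne_zero 2 (gQ_pos ρ b hN hρ hρsum hbpos t hx).ne'

lemma g_self (hbmono : StrictMono b) (i : Fin N) :
    g ρ b W0 (b i) (b i) = classW ρ b W0 i := by
  conv_rhs => rw [classW]
  unfold g gP gQ
  congr 1
  · congr 1
    refine Finset.sum_congr rfl fun k _ => ?_
    rw [dite_eq_ite]
    exact if_congr hbmono.lt_iff_lt rfl rfl
  · congr 1
    exact Finset.sum_congr rfl fun k _ => if_congr hbmono.le_iff_le rfl rfl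

lemma hPiff (i : Fin N) (t' : ℝ) (ht1 : b i < t') (ht2 : ∀ k, b i < b k → t' ≤ b k) :
    ∀ k, (b k < t' ↔ b k ≤ b i) := by
  intro k
  constructor
  · intro h
    by_contra hn
    push_neg at hn
    exact absurd h (not_lt.2 (ht2 k hn))
  · intro h
    exact lt_of_le_of_lt h ht1

lemma hQiff (i : Fin N) (t' : ℝ) (ht1 : b i < t') (ht2 : ∀ k, b i < b k → t' ≤ b k) :
    ∀ k, (t' ≤ b k ↔ b i < b k) := by
  intro k
  exact ⟨fun h => lt_of_lt_of_le ht1 h, fun h => ht2 k h⟩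

lemma gP_val (hbpos : ∀ k, 0 < b k) (i : Fin N) (t' : ℝ) (ht1 : b i < t')
    (ht2 : ∀ k, b i < b k → t' ≤ b k) :
    gP ρ b W0 t' (b i) = gP ρ b W0 (b i) (b i) := by
  unfold gP
  congr 1
  refine Finset.sum_congr rfl fun k _ => ?_
  rcases lt_trichotomy (b k) (b i) with h | h | h
  · rw [if_pos ((hPiff b i t' ht1 ht2 k).2 h.le), if_pos h]
  · have e : ρ k * (1 - b k / b i) * classW ρ b W0 k = 0 := by
      rw [h, div_self (hbpos i).ne']; ring
    rw [if_pos ((hPiff b i t' ht1 ht2 k).2 h.le), if_neg (by rw [h]; exact lt_irrefl _), e]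
  · rw [if_neg (fun hc => absurd ((hPiff b i t' ht1 ht2 k).1 hc) (not_le.2 h)),
      if_neg (not_lt.2 h.le)]

lemma gQ_val (hbpos : ∀ k, 0 < b k) (i : Fin N) (t' : ℝ) (ht1 : b i < t')
    (ht2 : ∀ k, b i < b k → t' ≤ b k) :
    gQ ρ b t' (b i) = gQ ρ b (b i) (b i) := by
  unfold gQ
  congr 1
  refine Finset.sum_congr rfl fun k _ => ?_
  rcases lt_trichotomy (b k) (b i) with h | h | h
  · rw [if_neg (fun hc => absurd ((hQiff b i t' ht1 ht2 k).1 hc) (not_lt.2 h.le)),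
      if_neg (not_le.2 h)]
  · have e : ρ k * (1 - b i / b k) = 0 := by
      rw [h, div_self (hbpos i).ne']; ring
    rw [if_neg (fun hc => absurd ((hQiff b i t' ht1 ht2 k).1 hc) (by rw [h]; exact lt_irrefl _)),
      if_pos h.ge, e]
  · rw [if_pos ((hQiff b i t' ht1 ht2 k).2 h), if_pos h.le]

lemma gP'_split (hbmono : StrictMono b) (i : Fin N) (t' : ℝ) (ht1 : b i < t')
    (ht2 : ∀ k, b i < b k → t' ≤ b k) :
    gP' ρ b W0 t' (b i)
      = gP' ρ b W0 (b i) (b i) - ρ i * (b i / (b i) ^ 2) * classW ρ b W0 i := by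
  have key : ∀ k : Fin N,
      (if b k < t' then ρ k * (b k / (b i) ^ 2) * classW ρ b W0 k else 0)
      = (if b k < b i then ρ k * (b k / (b i) ^ 2) * classW ρ b W0 k else 0)
        + (if k = i then ρ k * (b k / (b i) ^ 2) * classW ρ b W0 k else 0) := by
    intro k
    rcases lt_trichotomy (b k) (b i) with h | h | h
    · rw [if_pos ((hPiff b i t' ht1 ht2 k).2 h.le), if_pos h,
        if_neg (fun hc => absurd (congrArg b hc) h.ne), add_zero]
    · have hki : k = i := hbmono.injective h
      rw [if_pos ((hPiff b i t' ht1 ht2 k).2 h.le), if_neg (by rw [h]; exact lt_irrefl _),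
        if_pos hki, zero_add]
    · rw [if_neg (fun hc => absurd ((hPiff b i t' ht1 ht2 k).1 hc) (not_le.2 h)),
        if_neg (not_lt.2 h.le), if_neg (fun hc => absurd (congrArg b hc) h.ne'), add_zero]
  have hsum : (∑ k : Fin N, if b k < t' then ρ k * (b k / (b i) ^ 2) * classW ρ b W0 k else 0)
      = (∑ k : Fin N, if b k < b i then ρ k * (b k / (b i) ^ 2) * classW ρ b W0 k else 0)
        + ρ i * (b i / (b i) ^ 2) * classW ρ b W0 i := by
    rw [Finset.sum_congr rfl fun k _ => key k, Finset.sum_add_distrib]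
    congr 1
    simp [Finset.sum_ite_eq']
  unfold gP'
  rw [hsum]
  ring

lemma gQ'_split (hbmono : StrictMono b) (i : Fin N) (t' : ℝ) (ht1 : b i < t')
    (ht2 : ∀ k, b i < b k → t' ≤ b k) :
    gQ' ρ b t' = gQ' ρ b (b i) - ρ i / b i := by
  have key : ∀ k : Fin N,
      (if b i ≤ b k then ρ k / b k else 0)
      = (if t' ≤ b k then ρ k / b k else 0) + (if k = i then ρ k / b k else 0) := by
    intro k
    rcases lt_trichotomy (b k) (b i) with h | h | h
    · rw [if_neg (not_le.2 h), if_neg (fun hc => absurd ((hQiff b i t' ht1 ht2 k).1 hc)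
        (not_lt.2 h.le)), if_neg (fun hc => absurd (congrArg b hc) h.ne), add_zero]
    · have hki : k = i := hbmono.injective h
      rw [if_pos h.ge, if_neg (fun hc => absurd ((hQiff b i t' ht1 ht2 k).1 hc)
        (by rw [h]; exact lt_irrefl _)), if_pos hki, zero_add]
    · rw [if_pos h.le, if_pos ((hQiff b i t' ht1 ht2 k).2 h),
        if_neg (fun hc => absurd (congrArg b hc) h.ne'), add_zero]
  have hsum : (∑ k : Fin N, if b i ≤ b k then ρ k / b k else 0)
      = (∑ k : Fin N, if t' ≤ b k then ρ k / b k else 0) + ρ i / b i := by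
    rw [Finset.sum_congr rfl fun k _ => key k, Finset.sum_add_distrib]
    congr 1
    simp [Finset.sum_ite_eq']
  unfold gQ'
  rw [hsum]
  ring

lemma Dg_eq (hN : 1 ≤ N) (hρ : ∀ k, 0 < ρ k) (hρsum : ∑ k, ρ k < 1)
    (hbpos : ∀ k, 0 < b k) (hbmono : StrictMono b) (i : Fin N) (t' : ℝ) (ht1 : b i < t')
    (ht2 : ∀ k, b i < b k → t' ≤ b k) :
    Dg ρ b W0 t' (b i) = Dg ρ b W0 (b i) (b i) := by
  have hbne : b i ≠ 0 := (hbpos i).ne'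
  have hQ := gQ_pos ρ b hN hρ hρsum hbpos (b i) (hbpos i)
  have hkey : gP ρ b W0 (b i) (b i) = classW ρ b W0 i * gQ ρ b (b i) (b i) := by
    have hg := g_self ρ b W0 hbmono i
    unfold g at hg
    rw [div_eq_iff hQ.ne'] at hg
    exact hg
  unfold Dg
  rw [gP_val ρ b W0 hbpos i t' ht1 ht2, gQ_val ρ b hbpos i t' ht1 ht2,
    gP'_split ρ b W0 hbmono i t' ht1 ht2, gQ'_split ρ b hbmono i t' ht1 ht2, hkey]
  congr 1
  field_simp
  ring

lemma exists_t' (i : Fin N) : ∃ t', b i < t' ∧ ∀ k, b i < b k → t' ≤ b k := by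
  by_cases hS : (Finset.univ.filter fun k => b i < b k).Nonempty
  · refine ⟨(Finset.univ.filter fun k => b i < b k).inf' hS b, ?_, ?_⟩
    · rw [Finset.lt_inf'_iff]
      intro k hk
      exact (Finset.mem_filter.1 hk).2
    · intro k hk
      exact Finset.inf'_le b (Finset.mem_filter.2 ⟨Finset.mem_univ k, hk⟩)
  · exact ⟨b i + 1, by linarith, fun k hk =>
      absurd ⟨k, Finset.mem_filter.2 ⟨Finset.mem_univ k, hk⟩⟩ hS⟩

lemma junction (hN : 1 ≤ N) (hρ : ∀ k, 0 < ρ k) (hρsum : ∑ k, ρ k < 1)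
    (hbpos : ∀ k, 0 < b k) (hbmono : StrictMono b) (i : Fin N) :
    HasDerivWithinAt (taggedW ρ b W0) (Dg ρ b W0 (b i) (b i)) (Iic (b i)) (b i) ∧
    HasDerivWithinAt (taggedW ρ b W0) (Dg ρ b W0 (b i) (b i)) (Ici (b i)) (b i) ∧
    ContinuousAt (deriv (taggedW ρ b W0)) (b i) := by
  obtain ⟨t', ht1, ht2⟩ := exists_t' b i
  have hUev : ∀ᶠ x in nhds (b i), ∀ k, b k < b i → b k < x := by
    rw [eventually_all]
    intro k
    by_cases h : b k < b i
    · filter_upwards [eventually_gt_nhds h] with x hx _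
      exact hx
    · filter_upwards with x hx
      exact absurd hx h
  have hevL : taggedW ρ b W0 =ᶠ[nhdsWithin (b i) (Iic (b i))] g ρ b W0 (b i) := by
    filter_upwards [hUev.filter_mono nhdsWithin_le_nhds, self_mem_nhdsWithin] with x hx hxI
    refine taggedW_congr ρ b W0 (b i) x (fun k => ?_) (fun k => ?_)
    · constructor
      · intro h
        by_contra hn
        exact absurd h (not_lt.2 (le_trans (mem_Iic.1 hxI) (not_lt.1 hn)))
      · exact hx k
    · constructor
      · intro h
        by_contra hn
        exact absurd (hx k (not_le.1 hn)) (not_lt.2 h)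
      · intro h
        exact le_trans (mem_Iic.1 hxI) h
  have hgL := hasDerivAt_g ρ b W0 hN hρ hρsum hbpos (b i) (hbpos i)
  have hL : HasDerivWithinAt (taggedW ρ b W0) (Dg ρ b W0 (b i) (b i)) (Iic (b i)) (b i) :=
    hgL.hasDerivWithinAt.congr_of_eventuallyEq hevL rfl
  have hval : taggedW ρ b W0 (b i) = g ρ b W0 t' (b i) := by
    rw [taggedW_eq]
    unfold g
    rw [← gP_val ρ b W0 hbpos i t' ht1 ht2, ← gQ_val ρ b hbpos i t' ht1 ht2]
  have hevR : taggedW ρ b W0 =ᶠ[nhdsWithin (b i) (Ici (b i))] g ρ b W0 t' := by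
    filter_upwards [(eventually_lt_nhds ht1).filter_mono nhdsWithin_le_nhds,
      self_mem_nhdsWithin] with x hx hxI
    rcases (mem_Ici.1 hxI).lt_or_eq with hlt | heq
    · refine taggedW_congr ρ b W0 t' x (fun k => ?_) (fun k => ?_)
      · constructor
        · intro h
          by_contra hn
          exact absurd h (not_lt.2 (le_trans hx.le (not_lt.1 hn)))
        · intro h
          exact lt_of_le_of_lt ((hPiff b i t' ht1 ht2 k).1 h) hlt
      · constructor
        · intro h
          exact (hQiff b i t' ht1 ht2 k).2 (lt_of_lt_of_le hlt h)
        · intro h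
          exact le_trans hx.le h
    · rw [← heq]
      exact hval
  have hgR := hasDerivAt_g ρ b W0 hN hρ hρsum hbpos t' (hbpos i)
  have hR : HasDerivWithinAt (taggedW ρ b W0) (Dg ρ b W0 (b i) (b i)) (Ici (b i)) (b i) := by
    rw [← Dg_eq ρ b W0 hN hρ hρsum hbpos hbmono i t' ht1 ht2]
    exact hgR.hasDerivWithinAt.congr_of_eventuallyEq hevR hval
  have hD : HasDerivAt (taggedW ρ b W0) (Dg ρ b W0 (b i) (b i)) (b i) := by
    have h := hL.union hR
    rw [Iic_union_Ici] at h
    exact hasDerivWithinAt_univ.mp h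
  have hderiv : deriv (taggedW ρ b W0) (b i) = Dg ρ b W0 (b i) (b i) := hD.deriv
  have hCL : ContinuousWithinAt (deriv (taggedW ρ b W0)) (Iic (b i)) (b i) := by
    have hcont : ContinuousWithinAt (Dg ρ b W0 (b i)) (Iic (b i)) (b i) :=
      ((continuousOn_Dg ρ b W0 hN hρ hρsum hbpos (b i)).continuousAt
        (Ioi_mem_nhds (hbpos i))).continuousWithinAt
    refine hcont.congr_of_eventuallyEq ?_ hderiv
    filter_upwards [hUev.filter_mono nhdsWithin_le_nhds,
      (eventually_gt_nhds (hbpos i)).filter_mono nhdsWithin_le_nhds,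
      self_mem_nhdsWithin] with x hxU hx0 hxI
    rcases (mem_Iic.1 hxI).lt_or_eq with hlt | heq
    · have hloc : taggedW ρ b W0 =ᶠ[nhds x] g ρ b W0 (b i) := by
        have hev2 : ∀ᶠ y in nhds x, (∀ k, b k < b i → b k < y) ∧ y < b i := by
          refine Filter.Eventually.and ?_ (eventually_lt_nhds hlt)
          rw [eventually_all]
          intro k
          by_cases h : b k < b i
          · filter_upwards [eventually_gt_nhds (hxU k h)] with y hy _
            exact hy
          · filter_upwards with y hy
            exact absurd hy h
        filter_upwards [hev2] with y hy
        obtain ⟨hy1, hy2⟩ := hy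
        refine taggedW_congr ρ b W0 (b i) y (fun k => ?_) (fun k => ?_)
        · exact ⟨fun h => lt_trans h hy2, fun h => hy1 k h⟩
        · constructor
          · intro h
            by_contra hn
            exact absurd (hy1 k (not_le.1 hn)) (not_lt.2 h)
          · intro h
            exact hy2.le.trans h
      rw [hloc.deriv_eq, (hasDerivAt_g ρ b W0 hN hρ hρsum hbpos (b i) hx0).deriv]
    · rw [heq, hderiv]
  have hCR : ContinuousWithinAt (deriv (taggedW ρ b W0)) (Ici (b i)) (b i) := by
    have hcont : ContinuousWithinAt (Dg ρ b W0 t') (Ici (b i)) (b i) :=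
      ((continuousOn_Dg ρ b W0 hN hρ hρsum hbpos t').continuousAt
        (Ioi_mem_nhds (hbpos i))).continuousWithinAt
    refine hcont.congr_of_eventuallyEq ?_
      (hderiv.trans (Dg_eq ρ b W0 hN hρ hρsum hbpos hbmono i t' ht1 ht2).symm)
    filter_upwards [(eventually_lt_nhds ht1).filter_mono nhdsWithin_le_nhds,
      self_mem_nhdsWithin] with x hxt hxI
    rcases (mem_Ici.1 hxI).lt_or_eq with hlt | heq
    · have hx0 : (0 : ℝ) < x := (hbpos i).trans hlt
      have hloc : taggedW ρ b W0 =ᶠ[nhds x] g ρ b W0 t' := by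
        filter_upwards [eventually_gt_nhds hlt, eventually_lt_nhds hxt] with y hy1 hy2
        refine taggedW_congr ρ b W0 t' y (fun k => ?_) (fun k => ?_)
        · constructor
          · intro h
            by_contra hn
            exact absurd h (not_lt.2 (le_trans hy2.le (not_lt.1 hn)))
          · intro h
            exact lt_of_le_of_lt ((hPiff b i t' ht1 ht2 k).1 h) hy1
        · constructor
          · intro h
            exact (hQiff b i t' ht1 ht2 k).2 (lt_of_lt_of_le hy1 h)
          · intro h
            exact le_trans hy2.le h
      rw [hloc.deriv_eq, (hasDerivAt_g ρ b W0 hN hρ hρsum hbpos t' hx0).deriv]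
    · rw [← heq]
      exact hderiv.trans (Dg_eq ρ b W0 hN hρ hρsum hbpos hbmono i t' ht1 ht2).symm
  have hCA : ContinuousAt (deriv (taggedW ρ b W0)) (b i) := by
    have h := hCL.union hCR
    rw [Iic_union_Ici] at h
    exact (continuousWithinAt_univ _ _).mp h
  exact ⟨hL, hR, hCA⟩

lemma generic (hN : 1 ≤ N) (hρ : ∀ k, 0 < ρ k) (hρsum : ∑ k, ρ k < 1)
    (hbpos : ∀ k, 0 < b k) {a : ℝ} (ha : 0 < a) (hna : ∀ k, b k ≠ a) :
    HasDerivAt (taggedW ρ b W0) (Dg ρ b W0 a a) a ∧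
      ContinuousAt (deriv (taggedW ρ b W0)) a := by
  have hev : taggedW ρ b W0 =ᶠ[nhds a] g ρ b W0 a := by
    have h : ∀ᶠ x in nhds a, ∀ k : Fin N, (b k < x ↔ b k < a) ∧ (x ≤ b k ↔ a ≤ b k) := by
      rw [eventually_all]
      intro k
      rcases lt_or_gt_of_ne (hna k) with h | h
      · filter_upwards [eventually_gt_nhds h] with x hx
        exact ⟨⟨fun _ => h, fun _ => hx⟩,
          ⟨fun hc => absurd hx (not_lt.2 hc), fun hc => absurd h (not_lt.2 hc)⟩⟩
      · filter_upwards [eventually_lt_nhds h] with x hx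
        exact ⟨⟨fun hc => absurd hc (not_lt.2 hx.le), fun hc => absurd hc (not_lt.2 h.le)⟩,
          ⟨fun _ => h.le, fun _ => hx.le⟩⟩
    filter_upwards [h] with x hx
    exact taggedW_congr ρ b W0 a x (fun k => (hx k).1) (fun k => (hx k).2)
  have hg := hasDerivAt_g ρ b W0 hN hρ hρsum hbpos a ha
  refine ⟨hg.congr_of_eventuallyEq hev, ?_⟩
  have h1 : deriv (taggedW ρ b W0) =ᶠ[nhds a] deriv (g ρ b W0 a) := hev.deriv
  have h2 : deriv (g ρ b W0 a) =ᶠ[nhds a] Dg ρ b W0 a := by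
    filter_upwards [Ioi_mem_nhds ha] with x hx
    exact (hasDerivAt_g ρ b W0 hN hρ hρsum hbpos a hx).deriv
  have h3 : ContinuousAt (Dg ρ b W0 a) a :=
    (continuousOn_Dg ρ b W0 hN hρ hρsum hbpos a).continuousAt (Ioi_mem_nhds ha)
  exact h3.congr (h1.trans h2).symm

end APQaux


theorem taggedW_differentiable_deriv_continuous (N : ℕ) (hN : 1 ≤ N)
    (ρ b : Fin N → ℝ) (W0 : ℝ)
    (hρ : ∀ k, 0 < ρ k) (hρsum : ∑ k, ρ k < 1) (hW0 : 0 < W0)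
    (hbpos : ∀ k, 0 < b k) (hbmono : StrictMono b) :
    (∀ a ∈ Set.Ioi (0 : ℝ), DifferentiableAt ℝ (taggedW ρ b W0) a) ∧
    ContinuousOn (deriv (taggedW ρ b W0)) (Set.Ioi (0 : ℝ)) ∧
    (∀ i : Fin N,
      derivWithin (taggedW ρ b W0) (Set.Iic (b i)) (b i) =
        derivWithin (taggedW ρ b W0) (Set.Ici (b i)) (b i)) := by
  refine ⟨?_, ?_, ?_⟩
  · intro a ha
    by_cases hex : ∃ i, b i = a
    · obtain ⟨i, rfl⟩ := hex
      obtain ⟨hLi, hRi, -⟩ := APQaux.junction ρ b W0 hN hρ hρsum hbpos hbmono i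
      have h := hLi.union hRi
      rw [Set.Iic_union_Ici] at h
      exact (hasDerivWithinAt_univ.mp h).differentiableAt
    · push_neg at hex
      exact (APQaux.generic ρ b W0 hN hρ hρsum hbpos ha hex).1.differentiableAt
  · apply continuousOn_of_forall_continuousAt
    intro a ha
    by_cases hex : ∃ i, b i = a
    · obtain ⟨i, rfl⟩ := hex
      exact (APQaux.junction ρ b W0 hN hρ hρsum hbpos hbmono i).2.2
    · push_neg at hex
      exact (APQaux.generic ρ b W0 hN hρ hρsum hbpos ha hex).2
  · intro i
    obtain ⟨hLi, hRi, -⟩ := APQaux.junction ρ b W0 hN hρ hρsum hbpos hbmono i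
    rw [hLi.derivWithin (uniqueDiffOn_Iic (b i) (b i) (Set.mem_Iic.2 le_rfl)),
      hRi.derivWithin (uniqueDiffOn_Ici (b i) (b i) (Set.mem_Ici.2 le_rfl))]
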